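/- There exists a universal constant C > 0 (independent of all the data below) with the following property. Let (Ω, ℱ, ℙ) be a probability space with filtration {ℱ_k}_{k≥0} and let {M_k}_{k≥0} be a martingale with increments Δ_k := M_k − M_{k−1}. Let {U_k}_{k≥1} be nonnegative integrable ℱ-measurable random variables, and let c > 0 and λ_0 ≥ c²/(4e) be constants such that for all k ≥ 1: |Δ_k| ≤ c almost surely, E[Δ_k² | ℱ_{k−1}] ≤ E[U_k | ℱ_{k−1}] almost surely, and for every K ∈ ℕ the sum S_K := Σ_{k=1}^K U_k satisfies S_K ≤ λ_0 almost surely. Then for every K ∈ ℕ and every ε ≥ 0 one has ℙ(M_K − M_0 > ε) ≤ C·exp(−ε/(2√(e·λ_0))). -/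

import Mathlib

open MeasureTheory Filter


lemma sum_Icc_one_eq_range' {α : Type*} [AddCommMonoid α] (f : ℕ → α) (K : ℕ) :
    ∑ k ∈ Finset.Icc 1 K, f k = ∑ j ∈ Finset.range K, f (j + 1) := by
  induction K with
  | zero => simp
  | succ n ih =>
      rw [Finset.sum_Icc_succ_top (Nat.succ_le_succ (Nat.zero_le n)), ih,
        Finset.sum_range_succ]

lemma exp_quad' {y : ℝ} (hy : |y| ≤ 2) :
    Real.exp y ≤ 1 + y + (Real.exp 2 - 3) / 4 * y ^ 2 := by
  have hsum : ∀ z : ℝ, Real.exp z = ∑' n : ℕ, z ^ n / ((Nat.factorial n : ℕ) : ℝ) := by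
    intro z
    rw [Real.exp_eq_exp_ℝ, NormedSpace.exp_eq_tsum_div]
  have hS : ∀ z : ℝ, Summable fun n : ℕ => z ^ n / ((Nat.factorial n : ℕ) : ℝ) := fun z =>
    Real.summable_pow_div_factorial z
  -- tail representation
  have htail : ∀ z : ℝ, Real.exp z = 1 + z + ∑' n : ℕ, z ^ (n + 2) / ((Nat.factorial (n+2) : ℕ) : ℝ) := by
    intro z
    have := (hS z).sum_add_tsum_nat_add 2
    rw [hsum z, ← this]
    simp [Finset.sum_range_succ]
  have h2 : Real.exp 2 = 1 + 2 + ∑' n : ℕ, (2:ℝ) ^ (n + 2) / ((Nat.factorial (n+2) : ℕ) : ℝ) := htail 2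
  have hyS : Summable fun n : ℕ => y ^ (n + 2) / ((Nat.factorial (n+2) : ℕ) : ℝ) := (hS y).comp_injective
    (add_left_injective 2)
  have h2S : Summable fun n : ℕ => (2:ℝ) ^ (n + 2) / ((Nat.factorial (n+2) : ℕ) : ℝ) := (hS 2).comp_injective
    (add_left_injective 2)
  have hterm : ∀ n : ℕ, y ^ (n + 2) / ((Nat.factorial (n+2) : ℕ) : ℝ) ≤ y ^ 2 / 4 * ((2:ℝ) ^ (n + 2) / ((Nat.factorial (n+2) : ℕ) : ℝ)) := by
    intro n
    have hfac : (0:ℝ) < ((Nat.factorial (n+2) : ℕ) : ℝ) := by positivity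
    rw [div_le_iff₀ hfac]
    have : y ^ (n + 2) ≤ |y| ^ (n + 2) := le_abs_self _ |>.trans (by rw [abs_pow])
    refine this.trans ?_
    have habs : |y| ^ (n + 2) ≤ y ^ 2 * 2 ^ n := by
      have h1 : |y| ^ (n + 2) = |y| ^ n * |y| ^ 2 := by ring
      have h2' : |y| ^ n ≤ 2 ^ n := pow_le_pow_left₀ (abs_nonneg y) hy n
      have h3 : |y| ^ 2 = y ^ 2 := sq_abs y
      rw [h1, h3]
      have : (0:ℝ) ≤ y ^ 2 := sq_nonneg y
      nlinarith [pow_nonneg (abs_nonneg y) n, pow_nonneg (show (0:ℝ) ≤ 2 by norm_num) n]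
    refine habs.trans (le_of_eq ?_)
    field_simp
    ring
  have := Summable.tsum_le_tsum hterm hyS (h2S.mul_left _)
  rw [htail y]
  have h2t : ∑' n : ℕ, y ^ 2 / 4 * ((2:ℝ) ^ (n + 2) / ((Nat.factorial (n+2) : ℕ) : ℝ)) =
      y ^ 2 / 4 * ∑' n : ℕ, (2:ℝ) ^ (n + 2) / ((Nat.factorial (n+2) : ℕ) : ℝ) := tsum_mul_left
  have h2v : ∑' n : ℕ, (2:ℝ) ^ (n + 2) / ((Nat.factorial (n+2) : ℕ) : ℝ) = Real.exp 2 - 3 := by linarith [h2]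
  rw [h2t, h2v] at this
  nlinarith [this]


lemma exp_le_succ_div_pow (m : ℕ) (hm : 1 ≤ m) :
    Real.exp 1 ≤ (((m:ℝ) + 1) / m) ^ (m + 1) := by
  have hmpos : (0:ℝ) < m := by exact_mod_cast hm
  have h1 : 1 - 1 / ((m:ℝ) + 1) ≤ Real.exp (-(1 / ((m:ℝ) + 1))) := by
    have := Real.add_one_le_exp (-(1 / ((m:ℝ) + 1)))
    linarith
  have h2 : Real.exp (1 / ((m:ℝ) + 1)) ≤ ((m:ℝ) + 1) / m := by
    have hpos : (0:ℝ) < 1 - 1 / ((m:ℝ) + 1) := by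
      rw [sub_pos, div_lt_one (by positivity)]; linarith
    have := one_div_le_one_div_of_le hpos h1
    rw [Real.exp_neg, one_div, inv_inv] at this
    refine this.trans (le_of_eq ?_)
    field_simp
    rw [add_sub_cancel_right, div_self hmpos.ne']
  calc Real.exp 1 = Real.exp (1 / ((m:ℝ) + 1)) ^ (m + 1) := by
        rw [← Real.exp_nat_mul]
        congr 1
        field_simp
        simp
    _ ≤ (((m:ℝ) + 1) / m) ^ (m + 1) :=
        pow_le_pow_left₀ (Real.exp_nonneg _) h2 _

lemma factorial_le_aux' : ∀ n : ℕ, 1 ≤ n →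
    ((Nat.factorial n : ℕ) : ℝ) ≤ (n : ℝ) ^ (n + 1) * Real.exp (1 - n) := by
  intro n
  induction n with
  | zero => intro h; omega
  | succ m ih =>
      intro _
      by_cases hm : m = 0
      · subst hm; simp [Nat.factorial]
      · have hm1 : 1 ≤ m := Nat.one_le_iff_ne_zero.mpr hm
        have ihm := ih hm1
        have hmpos : (0:ℝ) < m := by exact_mod_cast hm1
        have hkey : (m:ℝ) ^ (m + 1) * Real.exp 1 ≤ ((m:ℝ) + 1) ^ (m + 1) := by
          have := exp_le_succ_div_pow m hm1
          have h2 : (m:ℝ) ^ (m+1) * ((((m:ℝ) + 1) / m) ^ (m + 1)) = ((m:ℝ)+1)^(m+1) := by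
            rw [div_pow, mul_div_assoc']
            field_simp
          nlinarith [pow_pos hmpos (m+1)]
        have hfact : ((Nat.factorial (m+1) : ℕ) : ℝ) = ((m:ℝ) + 1) * (Nat.factorial m : ℕ) := by
          rw [Nat.factorial_succ]; push_cast; ring
        rw [hfact]
        have hstep : ((m:ℝ) + 1) * ((Nat.factorial m : ℕ) : ℝ) ≤
            ((m:ℝ) + 1) * ((m : ℝ) ^ (m + 1) * Real.exp (1 - m)) := by
          have : (0:ℝ) ≤ (m:ℝ) + 1 := by positivity
          nlinarith [ihm]
        refine hstep.trans ?_
        have hexp : Real.exp (1 - (m:ℝ)) = Real.exp 1 * Real.exp (-(m:ℝ)) := by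
          rw [← Real.exp_add]; ring_nf
        have hexp2 : Real.exp (1 - ((m:ℕ)+1:ℝ)) = Real.exp (-(m:ℝ)) := by
          congr 1; ring
        have hcast : ((m+1:ℕ):ℝ) = (m:ℝ) + 1 := by push_cast; ring
        rw [hcast, hexp2, hexp]
        calc ((m:ℝ) + 1) * ((m:ℝ) ^ (m + 1) * (Real.exp 1 * Real.exp (-(m:ℝ))))
            = ((m:ℝ) + 1) * ((m:ℝ) ^ (m + 1) * Real.exp 1) * Real.exp (-(m:ℝ)) := by ring
          _ ≤ ((m:ℝ) + 1) * ((m:ℝ) + 1) ^ (m + 1) * Real.exp (-(m:ℝ)) := by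
              have h1 : (0:ℝ) ≤ Real.exp (-(m:ℝ)) := Real.exp_nonneg _
              have h2 : (0:ℝ) ≤ (m:ℝ) + 1 := by positivity
              exact mul_le_mul_of_nonneg_right (mul_le_mul_of_nonneg_left hkey h2) h1
          _ = ((m:ℝ) + 1) ^ (m + 1 + 1) * Real.exp (-(m:ℝ)) := by ring


lemma mul_exp_neg_le' {u v : ℝ} (hu : 1 ≤ u) (huv : u ≤ v) :
    v * Real.exp (-v) ≤ u * Real.exp (-u) := by
  have h1 : v - u + 1 ≤ Real.exp (v - u) := Real.add_one_le_exp (v - u)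
  have h4 : v ≤ u * Real.exp (v - u) := by nlinarith
  have h2 : Real.exp (-v) * Real.exp (v - u) = Real.exp (-u) := by
    rw [← Real.exp_add]; ring_nf
  have h3 : (0:ℝ) < Real.exp (-v) := Real.exp_pos _
  calc v * Real.exp (-v) ≤ (u * Real.exp (v - u)) * Real.exp (-v) :=
        mul_le_mul_of_nonneg_right h4 h3.le
    _ = u * Real.exp (-u) := by rw [← h2]; ring

lemma pow_sub_pow_le_succ' (p : ℕ) {a b : ℝ} (hb : 0 ≤ b) (hba : b ≤ a) :
    a ^ (p + 1) - b ^ (p + 1) ≤ (p + 1 : ℝ) * a ^ p * (a - b) := by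
  induction p with
  | zero => simp
  | succ q ih =>
      have ha : 0 ≤ a := hb.trans hba
      have h2 : b ^ (q + 1) ≤ a ^ (q + 1) := pow_le_pow_left₀ hb hba _
      have h5 : (a - b) * b ^ (q+1) ≤ (a - b) * a ^ (q+1) :=
        mul_le_mul_of_nonneg_left h2 (by linarith)
      have h6 := mul_le_mul_of_nonneg_left ih ha
      push_cast
      calc a ^ (q + 1 + 1) - b ^ (q + 1 + 1)
          = a * (a ^ (q+1) - b ^ (q+1)) + (a - b) * b ^ (q+1) := by ring
        _ ≤ a * ((↑q + 1) * a ^ q * (a - b)) + (a - b) * a ^ (q+1) := add_le_add h6 h5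
        _ = ((q:ℝ) + 1 + 1) * a ^ (q + 1) * (a - b) := by ring

lemma one_add_pow_le_exp' {u : ℝ} (hu : 0 ≤ u) (n : ℕ) :
    (1 + u) ^ n ≤ Real.exp (n * u) := by
  have h1 : 1 + u ≤ Real.exp u := by linarith [Real.add_one_le_exp u]
  calc (1 + u) ^ n ≤ Real.exp u ^ n := pow_le_pow_left₀ (by linarith) h1 n
    _ = Real.exp (n * u) := by rw [← Real.exp_nat_mul]


lemma integrable_of_ae_bound'' {Ω : Type} [MeasurableSpace Ω] {μ : Measure Ω} [IsFiniteMeasure μ]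
    {f : Ω → ℝ} (B : ℝ) (hf : AEStronglyMeasurable f μ) (h : ∀ᵐ ω ∂μ, |f ω| ≤ B) :
    Integrable f μ :=
  Integrable.mono' (integrable_const B) hf (h.mono fun ω hω => by
    simpa [Real.norm_eq_abs] using hω)

lemma garsia_bound'
    {Ω : Type} [m0 : MeasurableSpace Ω] (μ : Measure Ω) [IsProbabilityMeasure μ]
    (ℱ : Filtration ℕ m0) (U : ℕ → Ω → ℝ) (l₀ : ℝ) (hl₀ : 0 ≤ l₀)
    (hUint : ∀ j : ℕ, Integrable (U (j+1)) μ)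
    (hU0 : ∀ j : ℕ, ∀ᵐ ω ∂μ, 0 ≤ U (j+1) ω)
    (hsum : ∀ K : ℕ, ∀ᵐ ω ∂μ, ∑ j ∈ Finset.range K, U (j+1) ω ≤ l₀) :
    ∀ (K p : ℕ),
      ∫ ω, (∑ j ∈ Finset.range K, (μ[U (j+1)|ℱ j]) ω) ^ p ∂μ ≤ (Nat.factorial p) * l₀ ^ p := by
  intro K
  set V : ℕ → Ω → ℝ := fun j => μ[U (j+1)|ℱ j] with hV
  set T : ℕ → Ω → ℝ := fun n ω => ∑ j ∈ Finset.range n, V j ω with hT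
  -- basic properties of V
  have hVsm : ∀ j, StronglyMeasurable[ℱ j] (V j) := fun j => stronglyMeasurable_condExp
  have hVmeas : ∀ j, Measurable (V j) := fun j => ((hVsm j).mono (ℱ.le j)).measurable
  have hV0 : ∀ j, ∀ᵐ ω ∂μ, 0 ≤ V j ω := fun j => condExp_nonneg (hU0 j)
  have hUb : ∀ j, ∀ᵐ ω ∂μ, U (j+1) ω ≤ l₀ := by
    intro j
    filter_upwards [hsum (j+1), ae_all_iff.mpr (fun i : ℕ => hU0 i)] with ω h1 h2
    have hle : U (j+1) ω ≤ ∑ i ∈ Finset.range (j+1), U (i+1) ω := by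
      have := Finset.single_le_sum (f := fun i => U (i+1) ω)
        (fun i _ => h2 i) (Finset.self_mem_range_succ j)
      exact this
    linarith
  have hVb : ∀ j, ∀ᵐ ω ∂μ, V j ω ≤ l₀ := by
    intro j
    have h1 : μ[U (j+1)|ℱ j] ≤ᵐ[μ] μ[(fun _ => l₀)|ℱ j] :=
      condExp_mono (hUint j) (integrable_const l₀) (hUb j)
    have h2 : μ[(fun _ => l₀)|ℱ j] = fun (_ : Ω) => l₀ := condExp_const (ℱ.le j) l₀
    filter_upwards [h1] with ω hω
    simpa [h2] using hω
  -- all-j a.e. bundle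
  have hVae : ∀ᵐ ω ∂μ, ∀ j, 0 ≤ V j ω ∧ V j ω ≤ l₀ := by
    rw [ae_all_iff]
    intro j
    filter_upwards [hV0 j, hVb j] with ω h1 h2 using ⟨h1, h2⟩
  -- T measurable and bounded
  have hTmeas : ∀ n, Measurable (T n) := fun n =>
    Finset.measurable_sum _ (fun j _ => hVmeas j)
  have hTsm : ∀ n, StronglyMeasurable[ℱ n] (T n) := by
    intro n
    have : ∀ j ∈ Finset.range n, StronglyMeasurable[ℱ n] (V j) := by
      intro j hj
      exact (hVsm j).mono (ℱ.mono (Nat.le_of_lt_succ (Nat.lt_succ_of_lt (Finset.mem_range.mp hj))))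
    exact Finset.stronglyMeasurable_fun_sum _ this
  have hTbd : ∀ n, ∀ᵐ ω ∂μ, 0 ≤ T n ω ∧ T n ω ≤ n * l₀ := by
    intro n
    filter_upwards [hVae] with ω hω
    constructor
    · exact Finset.sum_nonneg fun j _ => (hω j).1
    · calc T n ω ≤ ∑ _j ∈ Finset.range n, l₀ :=
            Finset.sum_le_sum fun j _ => (hω j).2
        _ = n * l₀ := by simp [mul_comm]
  have hTmono : ∀ᵐ ω ∂μ, ∀ m n, m ≤ n → T m ω ≤ T n ω := by
    filter_upwards [hVae] with ω hω m n hmn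
    exact Finset.sum_le_sum_of_subset_of_nonneg
      (Finset.range_subset_range.mpr hmn) (fun j _ _ => (hω j).1)
  -- integrability of T^p and friends
  have hTpint : ∀ n p, Integrable (fun ω => T n ω ^ p) μ := by
    intro n p
    refine integrable_of_ae_bound'' ((n * l₀) ^ p) ((hTmeas n).pow_const p).aestronglyMeasurable ?_
    filter_upwards [hTbd n] with ω h
    rw [abs_pow, abs_of_nonneg h.1]
    exact pow_le_pow_left₀ h.1 h.2 p
  intro p
  induction p with
  | zero => simp
  | succ p ih =>
      -- telescoping identity, pointwise
      have htele : ∀ ω, T K ω ^ (p+1) =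
          ∑ j ∈ Finset.range K, (T (j+1) ω ^ (p+1) - T j ω ^ (p+1)) := by
        intro ω
        rw [Finset.sum_range_sub (fun j => T j ω ^ (p+1))]
        simp [hT]
      -- step 1 : ∫ T K ^ (p+1) ≤ ∑ j (p+1) ∫ T(j+1)^p * V j
      have step1 : ∫ ω, T K ω ^ (p+1) ∂μ ≤
          ∑ j ∈ Finset.range K, ((p:ℝ)+1) * ∫ ω, T (j+1) ω ^ p * V j ω ∂μ := by
        have hint : ∀ j, Integrable (fun ω => T (j+1) ω ^ p * V j ω) μ := by
          intro j
          refine integrable_of_ae_bound'' (((j+1) * l₀) ^ p * l₀)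
            (((hTmeas (j+1)).pow_const p).mul (hVmeas j)).aestronglyMeasurable ?_
          filter_upwards [hTbd (j+1), hVae] with ω h1 h2
          rw [abs_mul, abs_pow, abs_of_nonneg h1.1, abs_of_nonneg (h2 j).1]
          have := pow_le_pow_left₀ h1.1 h1.2 p
          have h3 : ((j:ℝ)+1) * l₀ = ((j+1:ℕ):ℝ) * l₀ := by push_cast; ring
          refine mul_le_mul ?_ (h2 j).2 (h2 j).1 (by positivity)
          refine this.trans (le_of_eq ?_)
          rw [← h3]
        calc ∫ ω, T K ω ^ (p+1) ∂μ
            ≤ ∫ ω, ∑ j ∈ Finset.range K, ((p:ℝ)+1) * (T (j+1) ω ^ p * V j ω) ∂μ := by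
              refine integral_mono_ae (hTpint K (p+1)) ?_ ?_
              · exact integrable_finset_sum _ fun j _ => ((hint j).const_mul _)
              · filter_upwards [hVae, hTbd K, hTmono] with ω hω hTK hmono
                rw [htele ω]
                refine Finset.sum_le_sum fun j _ => ?_
                have hb : 0 ≤ T j ω := Finset.sum_nonneg fun i _ => (hω i).1
                have hba : T j ω ≤ T (j+1) ω := hmono j (j+1) (Nat.le_succ j)
                have hdiff : T (j+1) ω - T j ω = V j ω := by
                  simp [hT, Finset.sum_range_succ]
                have := pow_sub_pow_le_succ' p hb hba
                rw [hdiff] at this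
                calc T (j+1) ω ^ (p+1) - T j ω ^ (p+1) ≤ ((p:ℝ)+1) * T (j+1) ω ^ p * V j ω := this
                  _ = ((p:ℝ)+1) * (T (j+1) ω ^ p * V j ω) := by ring
          _ = ∑ j ∈ Finset.range K, ((p:ℝ)+1) * ∫ ω, T (j+1) ω ^ p * V j ω ∂μ := by
              rw [integral_finset_sum _ fun j _ => ((hint j).const_mul _)]
              exact Finset.sum_congr rfl fun j _ => integral_const_mul _ _
      -- step 2 : pull-out property
      have step2 : ∀ j, ∫ ω, T (j+1) ω ^ p * V j ω ∂μ =
          ∫ ω, T (j+1) ω ^ p * U (j+1) ω ∂μ := by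
        intro j
        set f : Ω → ℝ := fun ω => T (j+1) ω ^ p with hf
        have hsmf : StronglyMeasurable[ℱ j] f := by
          have hsum' : StronglyMeasurable[ℱ j] (T (j+1)) := by
            refine Finset.stronglyMeasurable_fun_sum _ ?_
            intro i hi
            exact (hVsm i).mono (ℱ.mono (Nat.lt_succ_iff.mp (Finset.mem_range.mp hi)))
          exact hsum'.pow _
        have hmulint : Integrable (f * U (j+1)) μ := by
          refine integrable_of_ae_bound'' (((j+1) * l₀) ^ p * l₀)
            ((((hTmeas (j+1)).pow_const p).mono (le_refl _) le_rfl).aestronglyMeasurable.mul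
              (hUint j).aestronglyMeasurable) ?_
          filter_upwards [hTbd (j+1), hU0 j, hUb j] with ω h1 h2 h3
          simp only [Pi.mul_apply, hf]
          rw [abs_mul, abs_pow, abs_of_nonneg h1.1, abs_of_nonneg h2]
          have h4 : T (j+1) ω ^ p ≤ (((j+1):ℕ) * l₀) ^ p := pow_le_pow_left₀ h1.1 h1.2 p
          exact mul_le_mul (by exact_mod_cast h4) h3 h2 (by positivity)
        have pull := condExp_mul_of_stronglyMeasurable_left hsmf hmulint (hUint j)
        calc ∫ ω, f ω * V j ω ∂μ = ∫ ω, (f * μ[U (j+1)|ℱ j]) ω ∂μ := by rfl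
          _ = ∫ ω, (μ[f * U (j+1)|ℱ j]) ω ∂μ := (integral_congr_ae pull).symm
          _ = ∫ ω, (f * U (j+1)) ω ∂μ := integral_condExp (ℱ.le j)
          _ = ∫ ω, T (j+1) ω ^ p * U (j+1) ω ∂μ := by rfl
      -- step 3 : sum of the U-integrals is at most l₀ ∫ T K ^ p
      have hfUint : ∀ j, Integrable (fun ω => T (j+1) ω ^ p * U (j+1) ω) μ := by
        intro j
        refine integrable_of_ae_bound'' (((j+1) * l₀) ^ p * l₀)
          (((hTmeas (j+1)).pow_const p).aestronglyMeasurable.mul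
            (hUint j).aestronglyMeasurable) ?_
        filter_upwards [hTbd (j+1), hU0 j, hUb j] with ω h1 h2 h3
        rw [abs_mul, abs_pow, abs_of_nonneg h1.1, abs_of_nonneg h2]
        have h4 : T (j+1) ω ^ p ≤ (((j+1):ℕ) * l₀) ^ p := pow_le_pow_left₀ h1.1 h1.2 p
        exact mul_le_mul (by exact_mod_cast h4) h3 h2 (by positivity)
      have step3 : ∑ j ∈ Finset.range K, ∫ ω, T (j+1) ω ^ p * U (j+1) ω ∂μ ≤
          l₀ * ∫ ω, T K ω ^ p ∂μ := by
        calc ∑ j ∈ Finset.range K, ∫ ω, T (j+1) ω ^ p * U (j+1) ω ∂μ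
            = ∫ ω, ∑ j ∈ Finset.range K, T (j+1) ω ^ p * U (j+1) ω ∂μ :=
              (integral_finset_sum _ fun j _ => hfUint j).symm
          _ ≤ ∫ ω, T K ω ^ p * l₀ ∂μ := by
              refine integral_mono_ae (integrable_finset_sum _ fun j _ => hfUint j)
                ((hTpint K p).mul_const _) ?_
              filter_upwards [hTbd K, hTmono, ae_all_iff.mpr hU0, hsum K, hVae]
                with ω h1 h2 h3 h4 h5
              have hTKnn : 0 ≤ T K ω ^ p := pow_nonneg h1.1 p
              calc ∑ j ∈ Finset.range K, T (j+1) ω ^ p * U (j+1) ω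
                  ≤ ∑ j ∈ Finset.range K, T K ω ^ p * U (j+1) ω := by
                    refine Finset.sum_le_sum fun j hj => ?_
                    have hTj : 0 ≤ T (j+1) ω :=
                      Finset.sum_nonneg fun i _ => (h5 i).1
                    have hTjK : T (j+1) ω ≤ T K ω :=
                      h2 (j+1) K (Finset.mem_range.mp hj)
                    have hpow : T (j+1) ω ^ p ≤ T K ω ^ p := pow_le_pow_left₀ hTj hTjK p
                    exact mul_le_mul_of_nonneg_right hpow (h3 j)
                _ = T K ω ^ p * ∑ j ∈ Finset.range K, U (j+1) ω := by
                    rw [Finset.mul_sum]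
                _ ≤ T K ω ^ p * l₀ := mul_le_mul_of_nonneg_left h4 hTKnn
          _ = l₀ * ∫ ω, T K ω ^ p ∂μ := by rw [integral_mul_const]; ring
      -- combine
      have ih' : ∫ ω, T K ω ^ p ∂μ ≤ (Nat.factorial p) * l₀ ^ p := ih
      calc ∫ ω, T K ω ^ (p+1) ∂μ
          ≤ ∑ j ∈ Finset.range K, ((p:ℝ)+1) * ∫ ω, T (j+1) ω ^ p * V j ω ∂μ := step1
        _ = ((p:ℝ)+1) * ∑ j ∈ Finset.range K, ∫ ω, T (j+1) ω ^ p * U (j+1) ω ∂μ := by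
            rw [Finset.mul_sum]
            exact Finset.sum_congr rfl fun j _ => by rw [step2 j]
        _ ≤ ((p:ℝ)+1) * (l₀ * ∫ ω, T K ω ^ p ∂μ) := by
            refine mul_le_mul_of_nonneg_left step3 (by positivity)
        _ ≤ ((p:ℝ)+1) * (l₀ * ((Nat.factorial p) * l₀ ^ p)) := by
            have hTKnn : 0 ≤ ∫ ω, T K ω ^ p ∂μ := by
              refine integral_nonneg_of_ae ?_
              filter_upwards [hTbd K] with ω h using pow_nonneg h.1 p
            have : l₀ * ∫ ω, T K ω ^ p ∂μ ≤ l₀ * ((Nat.factorial p) * l₀ ^ p) :=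
              mul_le_mul_of_nonneg_left ih' hl₀
            nlinarith
        _ = (Nat.factorial (p+1)) * l₀ ^ (p+1) := by
            rw [Nat.factorial_succ]
            push_cast
            ring


lemma super_bound'
    {Ω : Type} [m0 : MeasurableSpace Ω] (μ : Measure Ω) [IsProbabilityMeasure μ]
    (ℱ : Filtration ℕ m0) (M U : ℕ → Ω → ℝ) (c t : ℝ)
    (hM : Martingale M ℱ μ)
    (ht : 0 < t) (htc : t * c ≤ 2)
    (hΔ : ∀ j : ℕ, ∀ᵐ ω ∂μ, |M (j+1) ω - M j ω| ≤ c)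
    (hUint : ∀ j : ℕ, Integrable (U (j+1)) μ)
    (hU0 : ∀ j, ∀ᵐ ω ∂μ, 0 ≤ U (j+1) ω)
    (hcond : ∀ j : ℕ, ∀ᵐ ω ∂μ,
        (μ[fun ω' => (M (j+1) ω' - M j ω') ^ 2|ℱ j]) ω ≤ (μ[U (j+1)|ℱ j]) ω) :
    ∀ K, ∫ ω, Real.exp (t * (M K ω - M 0 ω)
        - (Real.exp 2 - 3)/4 * t^2 * ∑ j ∈ Finset.range K, (μ[U (j+1)|ℱ j]) ω) ∂μ ≤ 1 := by
  set a : ℝ := (Real.exp 2 - 3)/4 * t^2 with ha_def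
  have he2 : (3:ℝ) ≤ Real.exp 2 := by
    have := Real.add_one_le_exp (2:ℝ); linarith
  have ha : 0 ≤ a := by
    have h4 : (0:ℝ) ≤ (Real.exp 2 - 3)/4 := by linarith
    positivity
  set V : ℕ → Ω → ℝ := fun j => μ[U (j+1)|ℱ j] with hV
  set T : ℕ → Ω → ℝ := fun n ω => ∑ j ∈ Finset.range n, V j ω with hT
  have hVsm : ∀ j, StronglyMeasurable[ℱ j] (V j) := fun j => stronglyMeasurable_condExp
  have hVmeas : ∀ j, Measurable (V j) := fun j => ((hVsm j).mono (ℱ.le j)).measurable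
  have hV0 : ∀ j, ∀ᵐ ω ∂μ, 0 ≤ V j ω := fun j => condExp_nonneg (hU0 j)
  have hV0' : ∀ᵐ ω ∂μ, ∀ j, 0 ≤ V j ω := ae_all_iff.mpr hV0
  have hT0 : ∀ n, ∀ᵐ ω ∂μ, 0 ≤ T n ω := by
    intro n
    filter_upwards [hV0'] with ω hω
    exact Finset.sum_nonneg fun j _ => hω j
  have hMmeas : ∀ n, Measurable (M n) := fun n =>
    ((hM.stronglyAdapted n).mono (ℱ.le n)).measurable
  have hMb : ∀ᵐ ω ∂μ, ∀ n : ℕ, |M n ω - M 0 ω| ≤ n * c := by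
    filter_upwards [ae_all_iff.mpr hΔ] with ω hω
    intro n
    induction n with
    | zero => simp
    | succ n ih =>
        have h1 := abs_sub_le (M (n+1) ω) (M n ω) (M 0 ω)
        have h2 := hω n
        push_cast
        push_cast at ih
        linarith
  -- the integrand
  set X : ℕ → Ω → ℝ := fun K ω => Real.exp (t * (M K ω - M 0 ω) - a * T K ω) with hX
  have hXmeas : ∀ K, Measurable (X K) := by
    intro K
    exact (Real.measurable_exp.comp
      ((((hMmeas K).sub (hMmeas 0)).const_mul t).sub
        ((Finset.measurable_sum _ (fun j _ => hVmeas j)).const_mul a)))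
  have hXbd : ∀ K, ∀ᵐ ω ∂μ, 0 ≤ X K ω ∧ X K ω ≤ Real.exp (t * (K * c)) := by
    intro K
    filter_upwards [hMb, hT0 K] with ω h1 h2
    refine ⟨(Real.exp_pos _).le, Real.exp_le_exp.mpr ?_⟩
    have h3 : M K ω - M 0 ω ≤ K * c := (abs_le.mp (h1 K)).2
    nlinarith [mul_le_mul_of_nonneg_left h3 ht.le]
  have hXint : ∀ K, Integrable (X K) μ := by
    intro K
    refine integrable_of_ae_bound'' (Real.exp (t * (K * c))) (hXmeas K).aestronglyMeasurable ?_
    filter_upwards [hXbd K] with ω h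
    rw [abs_of_nonneg h.1]; exact h.2
  intro K
  induction K with
  | zero => simp [hX, hT]
  | succ K ih =>
      set Δf : Ω → ℝ := fun ω => M (K+1) ω - M K ω with hΔf
      set F : Ω → ℝ := fun ω => Real.exp (t * (M K ω - M 0 ω) - a * T (K+1) ω) with hF
      set G : Ω → ℝ := fun ω => Real.exp (t * Δf ω) with hG
      have hFG : X (K+1) = F * G := by
        funext ω
        simp only [hX, hF, hG, Pi.mul_apply, hΔf]
        rw [← Real.exp_add]
        congr 1
        ring
      have hFsm : StronglyMeasurable[ℱ K] F := by
        have h1 : StronglyMeasurable[ℱ K] (M K) := hM.stronglyAdapted K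
        have h0 : StronglyMeasurable[ℱ K] (M 0) := (hM.stronglyAdapted 0).mono (ℱ.mono (Nat.zero_le K))
        have hTsm : StronglyMeasurable[ℱ K] (T (K+1)) := by
          refine Finset.stronglyMeasurable_fun_sum _ fun j hj => ?_
          exact (hVsm j).mono (ℱ.mono (Nat.lt_succ_iff.mp (Finset.mem_range.mp hj)))
        exact (Real.continuous_exp.comp_stronglyMeasurable
          (((h1.sub h0).const_mul t).sub (hTsm.const_mul a)))
      have hGbd : ∀ᵐ ω ∂μ, 0 < G ω ∧ G ω ≤ Real.exp (t * c) := by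
        filter_upwards [hΔ K] with ω h
        exact ⟨Real.exp_pos _, Real.exp_le_exp.mpr
          (mul_le_mul_of_nonneg_left ((abs_le.mp h).2) ht.le)⟩
      have hGmeas : Measurable G :=
        Real.measurable_exp.comp (((hMmeas (K+1)).sub (hMmeas K)).const_mul t)
      have hGint : Integrable G μ := by
        refine integrable_of_ae_bound'' (Real.exp (t * c)) hGmeas.aestronglyMeasurable ?_
        filter_upwards [hGbd] with ω h
        rw [abs_of_nonneg h.1.le]; exact h.2
      have hFbd : ∀ᵐ ω ∂μ, 0 ≤ F ω ∧ F ω ≤ Real.exp (t * (K * c)) := by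
        filter_upwards [hMb, hT0 (K+1)] with ω h1 h2
        refine ⟨(Real.exp_pos _).le, Real.exp_le_exp.mpr ?_⟩
        have h3 : M K ω - M 0 ω ≤ K * c := (abs_le.mp (h1 K)).2
        nlinarith [mul_le_mul_of_nonneg_left h3 ht.le]
      have hFmeas : Measurable F :=
        Real.measurable_exp.comp ((((hMmeas K).sub (hMmeas 0)).const_mul t).sub
          ((Finset.measurable_sum _ (fun j _ => hVmeas j)).const_mul a))
      have hFint : Integrable F μ := by
        refine integrable_of_ae_bound'' (Real.exp (t * (K * c))) hFmeas.aestronglyMeasurable ?_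
        filter_upwards [hFbd] with ω h
        rw [abs_of_nonneg h.1]; exact h.2
      have hFGint : Integrable (F * G) μ := by
        refine integrable_of_ae_bound'' (Real.exp (t * (K * c)) * Real.exp (t * c))
          (hFmeas.mul hGmeas).aestronglyMeasurable ?_
        filter_upwards [hFbd, hGbd] with ω h1 h2
        rw [Pi.mul_apply, abs_mul, abs_of_nonneg h1.1, abs_of_nonneg h2.1.le]
        exact mul_le_mul h1.2 h2.2 h2.1.le (Real.exp_nonneg _)
      -- conditional bound on G
      have hcondG : μ[G|ℱ K] ≤ᵐ[μ] fun ω => Real.exp (a * V K ω) := by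
        set sqf : Ω → ℝ := fun ω => Δf ω ^ 2 with hsqf
        set Q : Ω → ℝ := (fun _ => (1:ℝ)) + (t • Δf) + (a • sqf) with hQ
        have hΔbd : ∀ᵐ ω ∂μ, |Δf ω| ≤ c := hΔ K
        have hΔmeas : Measurable Δf := (hMmeas (K+1)).sub (hMmeas K)
        have hΔint : Integrable Δf μ :=
          ((hM.integrable (K+1)).sub (hM.integrable K))
        have hsqint : Integrable sqf μ := by
          refine integrable_of_ae_bound'' (c^2) (hΔmeas.pow_const 2).aestronglyMeasurable ?_
          filter_upwards [hΔbd] with ω h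
          rw [hsqf, abs_pow, sq_abs, ← sq_abs]
          exact pow_le_pow_left₀ (abs_nonneg _) h 2
        have hQint : Integrable Q μ :=
          (((integrable_const 1).add (hΔint.smul t)).add (hsqint.smul a))
        have hGQ : G ≤ᵐ[μ] Q := by
          filter_upwards [hΔbd] with ω h
          have habs : |t * Δf ω| ≤ 2 := by
            rw [abs_mul, abs_of_pos ht]
            calc t * |Δf ω| ≤ t * c := mul_le_mul_of_nonneg_left h ht.le
              _ ≤ 2 := htc
          have := exp_quad' habs
          simp only [hQ, Pi.add_apply, Pi.smul_apply, smul_eq_mul, hG]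
          calc Real.exp (t * Δf ω) ≤ 1 + t * Δf ω + (Real.exp 2 - 3)/4 * (t * Δf ω)^2 := this
            _ = 1 + t * Δf ω + a * sqf ω := by rw [hsqf]; ring
        have h1 : μ[G|ℱ K] ≤ᵐ[μ] μ[Q|ℱ K] := condExp_mono hGint hQint hGQ
        -- decompose the conditional expectation of Q
        have h2 : μ[Q|ℱ K] =ᵐ[μ] μ[(fun _ => (1:ℝ)) + (t • Δf)|ℱ K] + μ[a • sqf|ℱ K] :=
          condExp_add ((integrable_const 1).add (hΔint.smul t)) (hsqint.smul a) _
        have h3 : μ[(fun _ => (1:ℝ)) + (t • Δf)|ℱ K] =ᵐ[μ]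
            μ[(fun _ => (1:ℝ))|ℱ K] + μ[t • Δf|ℱ K] :=
          condExp_add (integrable_const 1) (hΔint.smul t) _
        have h4 : μ[(fun _ => (1:ℝ))|ℱ K] = fun _ => (1:ℝ) := condExp_const (ℱ.le K) 1
        have h5 : μ[t • Δf|ℱ K] =ᵐ[μ] t • μ[Δf|ℱ K] := condExp_smul t Δf _
        have h6 : μ[a • sqf|ℱ K] =ᵐ[μ] a • μ[sqf|ℱ K] := condExp_smul a sqf _
        have hΔ0 : μ[Δf|ℱ K] =ᵐ[μ] 0 := by
          have hs : μ[M (K+1) - M K|ℱ K] =ᵐ[μ] μ[M (K+1)|ℱ K] - μ[M K|ℱ K] :=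
            condExp_sub (hM.integrable (K+1)) (hM.integrable K) _
          have ha1 : μ[M (K+1)|ℱ K] =ᵐ[μ] M K := hM.condExp_ae_eq (Nat.le_succ K)
          have ha2 : μ[M K|ℱ K] =ᵐ[μ] M K := hM.condExp_ae_eq (le_refl K)
          have : Δf = M (K+1) - M K := rfl
          rw [this]
          filter_upwards [hs, ha1, ha2] with ω w1 w2 w3
          simp only [Pi.sub_apply] at w1 w2 w3 ⊢
          simp [w1, w2, w3]
        have hsqV : μ[sqf|ℱ K] ≤ᵐ[μ] V K := hcond K
        filter_upwards [h1, h2, h3, h5, h6, hΔ0, hsqV, hV0' ] with ω w1 w2 w3 w5 w6 w7 w8 w9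
        have : (μ[Q|ℱ K]) ω ≤ 1 + a * V K ω := by
          rw [w2]
          simp only [Pi.add_apply] at w3 ⊢
          rw [w3, w6, w5, h4]
          simp only [Pi.smul_apply, smul_eq_mul, w7, Pi.zero_apply]
          have := mul_le_mul_of_nonneg_left w8 ha
          linarith
        refine (w1.trans this).trans ?_
        have := Real.add_one_le_exp (a * V K ω)
        linarith
      -- put it together
      calc ∫ ω, X (K+1) ω ∂μ = ∫ ω, (F * G) ω ∂μ := by rw [hFG]
        _ = ∫ ω, (μ[F * G|ℱ K]) ω ∂μ := (integral_condExp (ℱ.le K)).symm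
        _ = ∫ ω, (F * μ[G|ℱ K]) ω ∂μ :=
            integral_congr_ae (condExp_mul_of_stronglyMeasurable_left hFsm hFGint hGint)
        _ ≤ ∫ ω, X K ω ∂μ := by
            refine integral_mono_ae ?_ (hXint K) ?_
            · exact integrable_condExp.congr
                (condExp_mul_of_stronglyMeasurable_left hFsm hFGint hGint)
            · have hTsucc : ∀ ω, T (K+1) ω = T K ω + V K ω := fun ω =>
                Finset.sum_range_succ _ K
              filter_upwards [hcondG, hFbd] with ω w1 w2
              have step : F ω * (μ[G|ℱ K]) ω ≤ F ω * Real.exp (a * V K ω) :=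
                mul_le_mul_of_nonneg_left w1 w2.1
              refine le_trans step (le_of_eq ?_)
              simp only [hF, hX]
              rw [← Real.exp_add]
              congr 1
              rw [hTsucc ω]
              ring
        _ ≤ 1 := ih

set_option maxHeartbeats 2000000 in
/-- **Martingale concentration (simplification of Kesten's Theorem 3), finite-time
version.** There is a universal constant `C > 0` such that: for every probability
space with filtration `ℱ`, every martingale `M` with increments `Δ_k = M_k - M_{k-1}`,
every choice of nonnegative integrable measurable random variables `U_k` (`k ≥ 1`)
and constants `c > 0`, `l₀ ≥ c²/(4e)` satisfying `|Δ_k| ≤ c` a.s.,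
`E[Δ_k² | ℱ_{k-1}] ≤ E[U_k | ℱ_{k-1}]` a.s., and `Σ_{k=1}^K U_k ≤ l₀` a.s. for every
`K`, one has `ℙ(M_K - M_0 > ε) ≤ C exp(-ε/(2√(e l₀)))` for every `K` and `ε ≥ 0`. -/
theorem martingale_concentration_finite :
    ∃ C : ℝ, 0 < C ∧
      ∀ (Ω : Type) [m0 : MeasurableSpace Ω] (μ : Measure Ω),
        IsProbabilityMeasure μ →
        ∀ (ℱ : Filtration ℕ m0) (M U : ℕ → Ω → ℝ) (c l₀ : ℝ),
          Martingale M ℱ μ →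
          0 < c → c ^ 2 / (4 * Real.exp 1) ≤ l₀ →
          (∀ k : ℕ, 1 ≤ k → ∀ᵐ ω ∂μ, |M k ω - M (k - 1) ω| ≤ c) →
          (∀ k : ℕ, 1 ≤ k → Measurable (U k)) →
          (∀ k : ℕ, 1 ≤ k → Integrable (U k) μ) →
          (∀ k : ℕ, 1 ≤ k → ∀ᵐ ω ∂μ, 0 ≤ U k ω) →
          (∀ k : ℕ, 1 ≤ k → ∀ᵐ ω ∂μ,
            (μ[fun ω' => (M k ω' - M (k - 1) ω') ^ 2|ℱ (k - 1)]) ω ≤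
              (μ[U k|ℱ (k - 1)]) ω) →
          (∀ K : ℕ, ∀ᵐ ω ∂μ, ∑ k ∈ Finset.Icc 1 K, U k ω ≤ l₀) →
          ∀ (K : ℕ) (ε : ℝ), 0 ≤ ε →
            μ {ω | ε < M K ω - M 0 ω} ≤
              ENNReal.ofReal (C * Real.exp (-ε / (2 * Real.sqrt (Real.exp 1 * l₀)))) := by
  refine ⟨20, by norm_num, ?_⟩
  intro Ω m0 μ hprob ℱ M U c l₀ hM hc hcl hΔi hUmeas hUint hU0 hcond hsum K ε hε
  haveI := hprob
  -- reindexed hypotheses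
  have hΔ : ∀ j : ℕ, ∀ᵐ ω ∂μ, |M (j+1) ω - M j ω| ≤ c := fun j => by
    simpa using hΔi (j+1) (by omega)
  have hUint' : ∀ j : ℕ, Integrable (U (j+1)) μ := fun j => hUint (j+1) (by omega)
  have hU0' : ∀ j : ℕ, ∀ᵐ ω ∂μ, 0 ≤ U (j+1) ω := fun j => hU0 (j+1) (by omega)
  have hcond' : ∀ j : ℕ, ∀ᵐ ω ∂μ,
      (μ[fun ω' => (M (j+1) ω' - M j ω') ^ 2|ℱ j]) ω ≤ (μ[U (j+1)|ℱ j]) ω := fun j => by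
    simpa using hcond (j+1) (by omega)
  have hsum' : ∀ n : ℕ, ∀ᵐ ω ∂μ, ∑ j ∈ Finset.range n, U (j+1) ω ≤ l₀ := by
    intro n
    filter_upwards [hsum n] with ω hω
    rwa [sum_Icc_one_eq_range' (fun k => U k ω) n] at hω
  -- basic constants
  have hepos : (0:ℝ) < Real.exp 1 := Real.exp_pos 1
  have hl₀ : 0 < l₀ := lt_of_lt_of_le (by positivity) hcl
  set s : ℝ := Real.sqrt (Real.exp 1 * l₀) with hs_def
  have hs : 0 < s := Real.sqrt_pos.mpr (by positivity)
  have hs2 : s^2 = Real.exp 1 * l₀ := Real.sq_sqrt (by positivity)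
  set t : ℝ := 1/s with ht_def
  have ht : 0 < t := by positivity
  have ht2 : t^2 = 1/(Real.exp 1 * l₀) := by
    rw [ht_def, div_pow, hs2]; norm_num
  have hcs : c ≤ 2*s := by
    have h1 : c^2 ≤ 4*(Real.exp 1 * l₀) := by
      rw [div_le_iff₀ (by positivity)] at hcl
      nlinarith
    nlinarith [sq_nonneg (c - 2*s), hs2, hs.le, hc.le]
  have htc : t * c ≤ 2 := by
    rw [ht_def, div_mul_eq_mul_div, one_mul, div_le_iff₀ hs]
    linarith
  have he2 : Real.exp 2 = Real.exp 1 * Real.exp 1 := by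
    rw [← Real.exp_add]; norm_num
  have he1lt : Real.exp 1 < 2.7182818286 := Real.exp_one_lt_d9
  have he1gt : 2.7182818283 < Real.exp 1 := Real.exp_one_gt_d9
  set x : ℝ := ε/(2*s) with hx_def
  have hx0 : 0 ≤ x := by positivity
  have hrw : -ε / (2*s) = -x := by rw [hx_def]; ring
  set a : ℝ := (Real.exp 2 - 3)/4 * t^2 with ha_def
  have he23 : (3:ℝ) ≤ Real.exp 2 := by nlinarith
  have ha : 0 ≤ a := by
    have : (0:ℝ) ≤ (Real.exp 2 - 3)/4 := by linarith
    positivity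
  -- the compensator
  set T : Ω → ℝ := fun ω => ∑ j ∈ Finset.range K, (μ[U (j+1)|ℱ j]) ω with hT_def
  have hVmeas : ∀ j : ℕ, Measurable (μ[U (j+1)|ℱ j]) := fun j =>
    (stronglyMeasurable_condExp.mono (ℱ.le j)).measurable
  have hV0 : ∀ᵐ ω ∂μ, ∀ j : ℕ, 0 ≤ (μ[U (j+1)|ℱ j]) ω :=
    ae_all_iff.mpr fun j => condExp_nonneg (hU0' j)
  have hUb : ∀ j : ℕ, ∀ᵐ ω ∂μ, U (j+1) ω ≤ l₀ := by
    intro j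
    filter_upwards [hsum' (j+1), ae_all_iff.mpr hU0'] with ω h1 h2
    have := Finset.single_le_sum (f := fun i => U (i+1) ω)
      (fun i _ => h2 i) (Finset.self_mem_range_succ j)
    linarith
  have hVb : ∀ᵐ ω ∂μ, ∀ j : ℕ, (μ[U (j+1)|ℱ j]) ω ≤ l₀ := by
    refine ae_all_iff.mpr fun j => ?_
    have h1 : μ[U (j+1)|ℱ j] ≤ᵐ[μ] μ[(fun _ => l₀)|ℱ j] :=
      condExp_mono (hUint' j) (integrable_const l₀) (hUb j)
    have h2 : μ[(fun _ => l₀)|ℱ j] = fun (_ : Ω) => l₀ := condExp_const (ℱ.le j) l₀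
    filter_upwards [h1] with ω hω
    simpa [h2] using hω
  have hTmeas : Measurable T := Finset.measurable_sum _ fun j _ => hVmeas j
  have hTbd : ∀ᵐ ω ∂μ, 0 ≤ T ω ∧ T ω ≤ K * l₀ := by
    filter_upwards [hV0, hVb] with ω h1 h2
    constructor
    · exact Finset.sum_nonneg fun j _ => h1 j
    · calc T ω ≤ ∑ _j ∈ Finset.range K, l₀ := Finset.sum_le_sum fun j _ => h2 j
        _ = K * l₀ := by simp [mul_comm]
  -- the exponential integrand
  set X : Ω → ℝ := fun ω => Real.exp (t * (M K ω - M 0 ω) - a * T ω) with hX_def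
  have hMmeas : ∀ n, Measurable (M n) := fun n => ((hM.stronglyAdapted n).mono (ℱ.le n)).measurable
  have hMb : ∀ᵐ ω ∂μ, |M K ω - M 0 ω| ≤ K * c := by
    filter_upwards [ae_all_iff.mpr hΔ] with ω hω
    have : ∀ n : ℕ, |M n ω - M 0 ω| ≤ n * c := by
      intro n
      induction n with
      | zero => simp
      | succ n ih =>
          have h1 := abs_sub_le (M (n+1) ω) (M n ω) (M 0 ω)
          have h2 := hω n
          push_cast
          push_cast at ih
          linarith
    exact this K
  have hXmeas : Measurable X :=
    Real.measurable_exp.comp ((((hMmeas K).sub (hMmeas 0)).const_mul t).sub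
      (hTmeas.const_mul a))
  have hXbd : ∀ᵐ ω ∂μ, 0 ≤ X ω ∧ X ω ≤ Real.exp (t * (K * c)) := by
    filter_upwards [hMb, hTbd] with ω h1 h2
    refine ⟨(Real.exp_pos _).le, Real.exp_le_exp.mpr ?_⟩
    have h3 : M K ω - M 0 ω ≤ K * c := (abs_le.mp h1).2
    nlinarith [mul_le_mul_of_nonneg_left h3 ht.le]
  have hXint : Integrable X μ := by
    refine integrable_of_ae_bound'' (Real.exp (t * (K * c))) hXmeas.aestronglyMeasurable ?_
    filter_upwards [hXbd] with ω h
    rw [abs_of_nonneg h.1]; exact h.2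
  have hXkey : ∫ ω, X ω ∂μ ≤ 1 := by
    have := super_bound' μ ℱ M U c t hM ht htc hΔ hUint' hU0' hcond' K
    exact this
  rw [hrw]
  -- case split on the size of x
  by_cases hxcase : x ≤ 2
  case pos =>
    calc μ {ω | ε < M K ω - M 0 ω} ≤ 1 := prob_le_one
      _ ≤ ENNReal.ofReal (20 * Real.exp (-x)) := by
        rw [ENNReal.one_le_ofReal]
        have h1 : Real.exp (-2) ≤ Real.exp (-x) := Real.exp_le_exp.mpr (by linarith)
        have h2 : Real.exp 2 * Real.exp (-2) = 1 := by
          rw [← Real.exp_add]; norm_num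
        have h3 : Real.exp 2 ≤ 8 := by nlinarith [he2, he1lt, he1gt]
        have h4 := mul_le_mul_of_nonneg_right h3 (Real.exp_pos (-2)).le
        linarith [Real.exp_pos (-x)]
  case neg =>
    push_neg at hxcase
    set L : ℝ := 2*x*l₀ with hL_def
    have hL : 0 < L := by positivity
    -- split the event
    have hsplit : μ {ω | ε < M K ω - M 0 ω} ≤
        μ ({ω | ε < M K ω - M 0 ω} ∩ {ω | T ω ≤ L}) + μ {ω | L < T ω} := by
      refine le_trans (measure_mono ?_) (measure_union_le _ _)
      intro ω hω
      by_cases h : T ω ≤ L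
      · exact Or.inl ⟨hω, h⟩
      · exact Or.inr (lt_of_not_ge h)
    -- Term 1 : Chernoff bound on the good event
    have hterm1 : μ ({ω | ε < M K ω - M 0 ω} ∩ {ω | T ω ≤ L}) ≤
        ENNReal.ofReal (Real.exp (-x)) := by
      set f1 : Ω → ℝ := fun ω => Real.exp (a*L - t*ε) * X ω with hf1_def
      have hf1nonneg : 0 ≤ᵐ[μ] f1 := ae_of_all _ fun ω => by
        have := Real.exp_pos (a*L - t*ε)
        have := Real.exp_pos (t * (M K ω - M 0 ω) - a * T ω)
        positivity
      have hf1int : Integrable f1 μ := hXint.const_mul _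
      have hincl1 : {ω | ε < M K ω - M 0 ω} ∩ {ω | T ω ≤ L} ⊆ {ω | 1 ≤ f1 ω} := by
        intro ω hω
        obtain ⟨h1, h2⟩ := hω
        simp only [Set.mem_setOf_eq] at h1 h2 ⊢
        rw [hf1_def]
        simp only [hX_def]
        rw [← Real.exp_add]
        rw [show (1:ℝ) = Real.exp 0 by simp]
        refine Real.exp_le_exp.mpr ?_
        have w1 := mul_le_mul_of_nonneg_left h2 ha
        have w2 := mul_lt_mul_of_pos_left h1 ht
        linarith
      have hmark := mul_meas_ge_le_integral_of_nonneg hf1nonneg hf1int 1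
      rw [one_mul] at hmark
      have hint1 : ∫ ω, f1 ω ∂μ ≤ Real.exp (a*L - t*ε) := by
        rw [hf1_def]
        calc ∫ ω, Real.exp (a*L - t*ε) * X ω ∂μ
            = Real.exp (a*L - t*ε) * ∫ ω, X ω ∂μ := integral_const_mul _ _
          _ ≤ Real.exp (a*L - t*ε) * 1 :=
              mul_le_mul_of_nonneg_left hXkey (Real.exp_nonneg _)
          _ = Real.exp (a*L - t*ε) := mul_one _
      have hnum1 : a*L - t*ε ≤ -x := by
        have htε : t*ε = 2*x := by
          rw [ht_def, hx_def]
          field_simp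
        have haL : a*L = (Real.exp 2 - 3) * x / (2*Real.exp 1) := by
          rw [ha_def, hL_def, ht2]
          field_simp
          ring
        have hkey : Real.exp 2 - 3 ≤ 2*Real.exp 1 := by nlinarith [he2, he1lt, he1gt]
        have hxpos : (0:ℝ) < x := by linarith
        have h5 : (Real.exp 2 - 3) * x / (2*Real.exp 1) ≤ x := by
          rw [div_le_iff₀ (by positivity)]
          nlinarith [mul_le_mul_of_nonneg_right hkey hxpos.le]
        rw [haL, htε]
        linarith
      have hA : (μ ({ω | ε < M K ω - M 0 ω} ∩ {ω | T ω ≤ L})).toReal ≤ Real.exp (-x) := by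
        refine le_trans (ENNReal.toReal_mono (measure_ne_top _ _) (measure_mono hincl1)) ?_
        exact hmark.trans (hint1.trans (Real.exp_le_exp.mpr hnum1))
      calc μ ({ω | ε < M K ω - M 0 ω} ∩ {ω | T ω ≤ L})
          = ENNReal.ofReal ((μ ({ω | ε < M K ω - M 0 ω} ∩ {ω | T ω ≤ L})).toReal) :=
            (ENNReal.ofReal_toReal (measure_ne_top _ _)).symm
        _ ≤ ENNReal.ofReal (Real.exp (-x)) := ENNReal.ofReal_le_ofReal hA
    -- Term 2 : Markov bound via the Garsia moment estimate
    have hterm2 : μ {ω | L < T ω} ≤ ENNReal.ofReal (2 * Real.exp 2 * Real.exp (-x)) := by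
      set p : ℕ := Nat.ceil (2*x) with hp_def
      have hp1 : 2*x ≤ (p:ℝ) := Nat.le_ceil _
      have hp2 : (p:ℝ) < 2*x+1 := Nat.ceil_lt_add_one (by positivity)
      have hp5 : 5 ≤ p := by
        have h4 : (4:ℝ) < (p:ℝ) := by linarith
        have : (4:ℕ) < p := by exact_mod_cast h4
        omega
      set f2 : Ω → ℝ := fun ω => (T ω / L)^p with hf2_def
      have hf2nonneg : 0 ≤ᵐ[μ] f2 := by
        filter_upwards [hTbd] with ω h
        have : 0 ≤ T ω / L := div_nonneg h.1 hL.le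
        positivity
      have hf2int : Integrable f2 μ := by
        refine integrable_of_ae_bound'' ((K*l₀/L)^p)
          (((hTmeas.div_const L).pow_const p).aestronglyMeasurable) ?_
        filter_upwards [hTbd] with ω h
        rw [abs_pow, abs_div, abs_of_nonneg h.1, abs_of_pos hL]
        exact pow_le_pow_left₀ (div_nonneg h.1 hL.le) ((div_le_div_iff_of_pos_right hL).mpr h.2) p
      have hincl2 : {ω | L < T ω} ⊆ {ω | 1 ≤ f2 ω} := by
        intro ω hω
        simp only [Set.mem_setOf_eq] at hω ⊢
        have h1 : 1 ≤ T ω / L := (one_le_div hL).mpr hω.le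
        have := pow_le_pow_left₀ (zero_le_one) h1 p
        simpa [hf2_def] using this
      have hmark := mul_meas_ge_le_integral_of_nonneg hf2nonneg hf2int 1
      rw [one_mul] at hmark
      have hTpint : Integrable (fun ω => T ω ^ p) μ := by
        refine integrable_of_ae_bound'' ((K*l₀)^p)
          ((hTmeas.pow_const p).aestronglyMeasurable) ?_
        filter_upwards [hTbd] with ω h
        rw [abs_pow, abs_of_nonneg h.1]
        exact pow_le_pow_left₀ h.1 h.2 p
      have hgars : ∫ ω, T ω ^ p ∂μ ≤ (Nat.factorial p) * l₀^p :=
        garsia_bound' μ ℱ U l₀ hl₀.le hUint' hU0' hsum' K p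
      have hint2 : ∫ ω, f2 ω ∂μ ≤ (Nat.factorial p) * l₀^p / L^p := by
        have hrw2 : f2 = fun ω => T ω ^ p * (L^p)⁻¹ := by
          funext ω
          show (T ω / L)^p = _
          rw [div_pow, div_eq_mul_inv]
        rw [hrw2, integral_mul_const]
        rw [div_eq_mul_inv]
        refine mul_le_mul_of_nonneg_right hgars ?_
        positivity
      have hnum2 : (Nat.factorial p) * l₀^p / L^p ≤ 2 * Real.exp 2 * Real.exp (-x) := by
        set q : ℝ := (p:ℝ) with hq_def
        have hq5 : (5:ℝ) ≤ q := by rw [hq_def]; exact_mod_cast hp5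
        have hq1 : (1:ℝ) < q - 1 := by linarith
        have hLp : L^p = (2*x)^p * l₀^p := by
          rw [hL_def, show 2*x*l₀ = (2*x)*l₀ by ring, mul_pow]
        have hred : (Nat.factorial p) * l₀^p / L^p = (Nat.factorial p) / (2*x)^p := by
          rw [hLp]
          rw [div_eq_div_iff (by positivity) (by positivity)]
          ring
        rw [hred]
        have A1 : ((Nat.factorial p : ℕ) : ℝ) ≤ q^(p+1) * Real.exp (1-q) :=
          factorial_le_aux' p (by omega)
        have A2 : (q-1)^p ≤ (2*x)^p := pow_le_pow_left₀ (by linarith) (by linarith) p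
        have A3 : (0:ℝ) < (q-1)^p := pow_pos (by linarith) p
        have B1 : (Nat.factorial p : ℝ) / (2*x)^p ≤ q^(p+1) * Real.exp (1-q) / (q-1)^p :=
          div_le_div₀ (by positivity) A1 A3 A2
        have B2 : q^(p+1) * Real.exp (1-q) / (q-1)^p =
            q * (q/(q-1))^p * Real.exp (1-q) := by
          rw [div_pow, pow_succ]
          field_simp
        have B3 : (q/(q-1))^p ≤ Real.exp 2 := by
          have hu : (0:ℝ) ≤ 1/(q-1) := by positivity
          have h1 : q/(q-1) = 1 + 1/(q-1) := by field_simp; ring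
          have h2 := one_add_pow_le_exp' hu p
          rw [h1]
          refine h2.trans (Real.exp_le_exp.mpr ?_)
          rw [mul_one_div, div_le_iff₀ (by linarith : (0:ℝ) < q - 1)]
          linarith
        have hexp1q : Real.exp (1-q) = Real.exp 1 * Real.exp (-q) := by
          rw [← Real.exp_add]; ring_nf
        have B4 : (Nat.factorial p : ℝ) / (2*x)^p ≤
            Real.exp 2 * Real.exp 1 * (q * Real.exp (-q)) := by
          refine B1.trans ?_
          rw [B2]
          have hqpos : (0:ℝ) ≤ q := by linarith
          have w1 : q * (q/(q-1))^p ≤ q * Real.exp 2 :=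
            mul_le_mul_of_nonneg_left B3 hqpos
          have w2 := mul_le_mul_of_nonneg_right w1 (Real.exp_nonneg (1-q))
          refine w2.trans (le_of_eq ?_)
          rw [hexp1q]
          ring
        have B5 : q * Real.exp (-q) ≤ (2*x) * Real.exp (-(2*x)) :=
          mul_exp_neg_le' (by linarith) hp1
        have B6 : x * Real.exp (-x) ≤ Real.exp (-1) := by
          have h1 : x ≤ Real.exp (x-1) := by
            have := Real.add_one_le_exp (x-1); linarith
          have h2 : Real.exp (x-1) * Real.exp (-x) = Real.exp (-1) := by
            rw [← Real.exp_add]; ring_nf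
          have h3 := mul_le_mul_of_nonneg_right h1 (Real.exp_pos (-x)).le
          linarith
        have B7 : (2*x) * Real.exp (-(2*x)) ≤ 2 * Real.exp (-1) * Real.exp (-x) := by
          have h1 : Real.exp (-(2*x)) = Real.exp (-x) * Real.exp (-x) := by
            rw [← Real.exp_add]; ring_nf
          rw [h1]
          have h2 := mul_le_mul_of_nonneg_right B6 (Real.exp_pos (-x)).le
          calc 2*x * (Real.exp (-x) * Real.exp (-x))
              = 2 * (x * Real.exp (-x) * Real.exp (-x)) := by ring
            _ ≤ 2 * (Real.exp (-1) * Real.exp (-x)) := by linarith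
            _ = 2 * Real.exp (-1) * Real.exp (-x) := by ring
        have hee : Real.exp 1 * Real.exp (-1) = 1 := by
          rw [← Real.exp_add]; norm_num
        calc (Nat.factorial p : ℝ) / (2*x)^p
            ≤ Real.exp 2 * Real.exp 1 * (q * Real.exp (-q)) := B4
          _ ≤ Real.exp 2 * Real.exp 1 * (2 * Real.exp (-1) * Real.exp (-x)) :=
              mul_le_mul_of_nonneg_left (B5.trans B7)
                (by positivity)
          _ = 2 * Real.exp 2 * (Real.exp 1 * Real.exp (-1)) * Real.exp (-x) := by ring
          _ = 2 * Real.exp 2 * Real.exp (-x) := by rw [hee]; ring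
      have hB : (μ {ω | L < T ω}).toReal ≤ 2 * Real.exp 2 * Real.exp (-x) := by
        refine le_trans (ENNReal.toReal_mono (measure_ne_top _ _) (measure_mono hincl2)) ?_
        exact hmark.trans (hint2.trans hnum2)
      calc μ {ω | L < T ω}
          = ENNReal.ofReal ((μ {ω | L < T ω}).toReal) :=
            (ENNReal.ofReal_toReal (measure_ne_top _ _)).symm
        _ ≤ ENNReal.ofReal (2 * Real.exp 2 * Real.exp (-x)) := ENNReal.ofReal_le_ofReal hB
    -- combine the two bounds
    refine hsplit.trans ((add_le_add hterm1 hterm2).trans ?_)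
    rw [← ENNReal.ofReal_add (Real.exp_nonneg _) (by positivity)]
    refine ENNReal.ofReal_le_ofReal ?_
    have hexp2 : Real.exp 2 ≤ 8 := by nlinarith [he2, he1lt, he1gt]
    have h1 := mul_le_mul_of_nonneg_right hexp2 (Real.exp_pos (-x)).le
    linarith [Real.exp_pos (-x)]
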